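/- arXiv:1308.2198 — 2 statements merged into one kernel-verified Lean document; each statement's English description precedes it below -/
import Mathlib

section
/- Pentagon identity: for Γ = ℤ² with ⟨γ₁,γ₂⟩ = 1, the Kontsevich–Soibelman transformations satisfy K_{γ₁} ∘ K_{γ₂} = K_{γ₂} ∘ K_{γ₁+γ₂} ∘ K_{γ₁} as birational transformations of the twisted torus. -/
/-- Action of `K_{γ₁}` on the coordinates `(x, y) = (X_{γ₁}, X_{γ₂})`:
`x ↦ x`, `y ↦ y(1-x)` (since `⟨γ₁,γ₂⟩ = 1`). -/
def K1 {F : Type*} [Field F] : F × F → F × F := fun p => (p.1, p.2 * (1 - p.1))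

/-- Action of `K_{γ₂}`: `x ↦ x(1-y)⁻¹`, `y ↦ y`. -/
def K2 {F : Type*} [Field F] : F × F → F × F := fun p => (p.1 / (1 - p.2), p.2)

/-- Action of `K_{γ₁+γ₂}`: since `X_{γ₁+γ₂} = -xy` by the twisted rule,
`x ↦ x(1+xy)⁻¹`, `y ↦ y(1+xy)`. -/
def K12 {F : Type*} [Field F] : F × F → F × F :=
  fun p => (p.1 / (1 + p.1 * p.2), p.2 * (1 + p.1 * p.2))

/-- the pentagon identity
`K_{γ₁} K_{γ₂} = K_{γ₂} K_{γ₁+γ₂} K_{γ₁}` for `Γ = ℤ²` with `⟨γ₁,γ₂⟩ = 1`, verified on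
the coordinates `x, y` as birational transformations (away from the vanishing loci
of the denominators `1 - y` and `1 - y + xy`). -/
theorem pentagon_identity {F : Type*} [Field F] (x y : F)
    (hy : 1 - y ≠ 0) (hxy : 1 - y + x * y ≠ 0) :
    K2 (K1 (x, y)) = K1 (K12 (K2 (x, y))) := by
  simp only [K1, K2, K12]
  have h1 : 1 + x / (1 - y) * y = (1 - y + x * y) / (1 - y) := by field_simp
  rw [h1, show 1 - y*(1-x) = 1 - y + x*y from by ring]
  rw [Prod.mk.injEq]; constructor <;> field_simp [show (1 : F) - y + y * x ≠ 0 by rwa [mul_comm]] <;> ring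
end

section
/- Five-term (pentagon) identity for the Rogers dilogarithm: for 0 < x, y < 1, L(x) + L(y) = L(xy) + L(x(1−y)/(1−xy)) + L(y(1−x)/(1−xy)), where L(x) = Li₂(x) + (1/2)log(x)log(1−x). -/
open Real MeasureTheory Set Filter intervalIntegral


/-- The dilogarithm `Li₂(x) = -∫₀ˣ log(1-t)/t dt` (on `[0,1)`). -/
noncomputable def Li2 (x : ℝ) : ℝ := -∫ t in (0:ℝ)..x, Real.log (1 - t) / t

lemma integrand_bound {a t : ℝ} (ha : a < 1) (ht : t ∈ Set.Ioc 0 a) :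
    |Real.log (1 - t) / t| ≤ 1 / (1 - a) := by
  obtain ⟨ht0, hta⟩ := ht
  have h1t : 0 < 1 - t := by linarith
  have hlog : Real.log (1 - t) ≤ 0 := Real.log_nonpos (by linarith) (by linarith)
  have key : -Real.log (1 - t) ≤ t / (1 - t) := by
    have := Real.log_le_sub_one_of_pos (x := (1 - t)⁻¹) (by positivity)
    rw [Real.log_inv] at this
    have : -Real.log (1 - t) ≤ (1 - t)⁻¹ - 1 := this
    calc -Real.log (1 - t) ≤ (1 - t)⁻¹ - 1 := this
    _ = t / (1 - t) := by field_simp; ring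
  have h2 : t / (1 - t) ≤ t / (1 - a) := by
    apply div_le_div_of_nonneg_left (le_of_lt ht0) (by linarith) (by linarith)
  rw [abs_div, abs_of_nonpos hlog, abs_of_pos ht0, div_le_div_iff₀ ht0 (by linarith)]
  calc -Real.log (1 - t) * (1 - a) ≤ (t / (1 - t)) * (1 - a) := by
        apply mul_le_mul_of_nonneg_right key (by linarith)
  _ ≤ (t / (1 - a)) * (1 - a) := by apply mul_le_mul_of_nonneg_right h2 (by linarith)
  _ = 1 * t := by rw [div_mul_cancel₀ _ (by linarith : (1:ℝ) - a ≠ 0), one_mul]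

lemma integrand_meas : Measurable (fun t : ℝ => Real.log (1 - t) / t) :=
  ((Real.measurable_log.comp (measurable_const.sub measurable_id)).div measurable_id)

lemma integrand_integrable {a : ℝ} (h0 : 0 ≤ a) (h1 : a < 1) :
    IntervalIntegrable (fun t : ℝ => Real.log (1 - t) / t) volume 0 a := by
  rw [intervalIntegrable_iff_integrableOn_Ioc_of_le h0]
  apply MeasureTheory.Integrable.mono' (integrableOn_const (C := 1 / (1 - a)) measure_Ioc_lt_top.ne)
    integrand_meas.aestronglyMeasurable.restrict
  filter_upwards [ae_restrict_mem measurableSet_Ioc] with t ht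
  rw [Real.norm_eq_abs]
  exact integrand_bound h1 ht

lemma li2_hasDerivAt {a : ℝ} (h0 : 0 < a) (h1 : a < 1) :
    HasDerivAt Li2 (-(Real.log (1 - a) / a)) a := by
  have hcont : ContinuousAt (fun t : ℝ => Real.log (1 - t) / t) a := by
    apply ContinuousAt.div
    · exact (Real.continuousAt_log (by linarith)).comp (by fun_prop)
    · fun_prop
    · exact ne_of_gt h0
  have hint : IntervalIntegrable (fun t : ℝ => Real.log (1 - t) / t) volume 0 a :=
    integrand_integrable h0.le h1
  have := (intervalIntegral.integral_hasDerivAt_right hint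
    integrand_meas.stronglyMeasurable.stronglyMeasurableAtFilter hcont).neg
  exact this


/-- The Rogers dilogarithm `L(x) = Li₂(x) + (1/2) log x log(1-x)` on `(0,1)`. -/
noncomputable def RogersL (x : ℝ) : ℝ := Li2 x + (1 / 2) * Real.log x * Real.log (1 - x)

lemma rogers_hasDerivAt {a : ℝ} (h0 : 0 < a) (h1 : a < 1) :
    HasDerivAt RogersL
      (-(1/2) * (Real.log (1 - a) / a + Real.log a / (1 - a))) a := by
  have ha : a ≠ 0 := ne_of_gt h0
  have h1a : (1:ℝ) - a ≠ 0 := by intro h; nlinarith [h]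
  have hlog : HasDerivAt Real.log a⁻¹ a := Real.hasDerivAt_log ha
  have hlog1 : HasDerivAt (fun t : ℝ => Real.log (1 - t)) (-(1 - a)⁻¹) a := by
    have h' : HasDerivAt (fun t : ℝ => 1 - t) (-1) a := by
      simpa using (hasDerivAt_id a).const_sub 1
    simpa [div_eq_mul_inv] using h'.log h1a
  have hprod : HasDerivAt (fun t : ℝ => (1/2 : ℝ) * Real.log t * Real.log (1 - t))
      ((1/2) * a⁻¹ * Real.log (1 - a) + (1/2) * Real.log a * (-(1 - a)⁻¹)) a := by
    exact ((hlog.const_mul (1/2:ℝ)).mul hlog1)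
  have := (li2_hasDerivAt h0 h1).add hprod
  refine this.congr_deriv (Eq.symm ?_)
  field_simp
  ring

lemma tendsto_li2_zero : Tendsto Li2 (nhdsWithin 0 (Set.Ioi 0)) (nhds 0) := by
  have hb : ∀ y ∈ Set.Ioc (0:ℝ) (1/2), |Li2 y| ≤ 2 * y := by
    intro y hy
    have hnorm : ‖∫ t in (0:ℝ)..y, Real.log (1 - t) / t‖ ≤ 2 * |y - 0| := by
      apply intervalIntegral.norm_integral_le_of_norm_le_const
      intro t ht
      rw [Set.uIoc_of_le hy.1.le] at ht
      rw [Real.norm_eq_abs]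
      have := integrand_bound (a := 1/2) (by norm_num)
        ⟨ht.1, ht.2.trans hy.2⟩
      calc |Real.log (1 - t) / t| ≤ 1 / (1 - 1/2) := this
      _ = 2 := by norm_num
    simp only [Li2, abs_neg, sub_zero, abs_of_pos hy.1] at hnorm ⊢
    rwa [Real.norm_eq_abs] at hnorm
  have h2 : Tendsto (fun y : ℝ => 2 * y) (nhdsWithin 0 (Set.Ioi 0)) (nhds 0) := by
    have h' : Tendsto (fun y : ℝ => 2 * y) (nhds 0) (nhds 0) := by
      have : Continuous (fun y : ℝ => 2 * y) := by fun_prop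
      simpa using this.tendsto 0
    exact h'.mono_left nhdsWithin_le_nhds
  apply squeeze_zero_norm'
  · filter_upwards [Ioc_mem_nhdsGT_of_mem (by norm_num : (0:ℝ) ∈ Set.Ico (0:ℝ) (1/2))] with y hy
    exact hb y hy
  · exact h2

lemma tendsto_rogers_zero : Tendsto RogersL (nhdsWithin 0 (Set.Ioi 0)) (nhds 0) := by
  have hlt : Tendsto (fun y : ℝ => (1/2 : ℝ) * Real.log y * Real.log (1 - y))
      (nhdsWithin 0 (Set.Ioi 0)) (nhds 0) := by
    have hb : ∀ y ∈ Set.Ioc (0:ℝ) (1/2), |(1/2 : ℝ) * Real.log y * Real.log (1 - y)| ≤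
        |Real.log y * y| := by
      intro y hy
      have h1 : |Real.log (1 - y)| ≤ 2 * y := by
        have := integrand_bound (a := 1/2) (by norm_num) hy
        rw [abs_div, abs_of_pos hy.1, div_le_iff₀ hy.1] at this
        calc |Real.log (1 - y)| ≤ 1/(1-1/2) * y := this
        _ = 2 * y := by norm_num
      rw [abs_mul, abs_mul, abs_mul]
      have : |(1/2 : ℝ)| * |Real.log y| * |Real.log (1 - y)| ≤
          |(1/2 : ℝ)| * |Real.log y| * (2 * y) := by
        apply mul_le_mul_of_nonneg_left h1 (by positivity)
      calc |(1/2 : ℝ)| * |Real.log y| * |Real.log (1 - y)| ≤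
          |(1/2 : ℝ)| * |Real.log y| * (2 * y) := this
      _ = |Real.log y| * y := by rw [abs_of_pos (by norm_num : (0:ℝ) < 1/2)]; ring
      _ = |Real.log y| * |y| := by rw [abs_of_pos hy.1]
    have hxlx : Tendsto (fun y : ℝ => Real.log y * y) (nhdsWithin 0 (Set.Ioi 0)) (nhds 0) := by
      have := tendsto_log_mul_rpow_nhdsGT_zero (r := 1) one_pos
      simpa using this
    apply squeeze_zero_norm'
    · filter_upwards [Ioc_mem_nhdsGT_of_mem (by norm_num : (0:ℝ) ∈ Set.Ico (0:ℝ) (1/2))] with y hy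
      exact hb y hy
    · simpa using hxlx.abs
  have := tendsto_li2_zero.add hlt
  have h : RogersL = fun x => Li2 x + (1/2 : ℝ) * Real.log x * Real.log (1 - x) := rfl
  rw [h]
  simpa using this

lemma rogers_deriv_zero (x : ℝ) (hx0 : 0 < x) (hx1 : x < 1) {z : ℝ} (hz : z ∈ Set.Ioo (0:ℝ) 1) :
    HasDerivAt (fun y => RogersL (x*y) + RogersL (x*(1-y)/(1-x*y)) +
      RogersL (y*(1-x)/(1-x*y)) - RogersL y) 0 z := by
  obtain ⟨hz0, hz1⟩ := hz
  have h1x : 0 < 1 - x := by linarith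
  have h1z : 0 < 1 - z := by linarith
  have hxz0 : 0 < x*z := mul_pos hx0 hz0
  have hxz1 : x*z < 1 := by nlinarith
  have hd : 0 < 1 - x*z := by linarith
  have hv0 : 0 < x*(1-z)/(1-x*z) := by positivity
  have hv1 : x*(1-z)/(1-x*z) < 1 := by rw [div_lt_one hd]; nlinarith
  have hw0 : 0 < z*(1-x)/(1-x*z) := by positivity
  have hw1 : z*(1-x)/(1-x*z) < 1 := by rw [div_lt_one hd]; nlinarith
  have hu : HasDerivAt (fun y : ℝ => x*y) x z := by
    simpa using (hasDerivAt_id z).const_mul x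
  have hden : HasDerivAt (fun y : ℝ => 1 - x*y) (-x) z := by
    simpa using ((hasDerivAt_id z).const_mul x).const_sub 1
  have hnv : HasDerivAt (fun y : ℝ => x*(1-y)) (-x) z := by
    simpa using ((hasDerivAt_id z).const_sub 1).const_mul x
  have hnw : HasDerivAt (fun y : ℝ => y*(1-x)) (1-x) z := by
    simpa using (hasDerivAt_id z).mul_const (1-x)
  have hv : HasDerivAt (fun y : ℝ => x*(1-y)/(1-x*y)) (x*(x-1)/(1-x*z)^2) z := by
    have := hnv.div hden (ne_of_gt hd)
    refine this.congr_deriv (Eq.symm ?_)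
    field_simp
    ring
  have hw : HasDerivAt (fun y : ℝ => y*(1-x)/(1-x*y)) ((1-x)/(1-x*z)^2) z := by
    have := hnw.div hden (ne_of_gt hd)
    refine this.congr_deriv (Eq.symm ?_)
    field_simp
    ring
  have H1 := (rogers_hasDerivAt hxz0 hxz1).comp z hu
  have H2 := (rogers_hasDerivAt hv0 hv1).comp z hv
  have H3 := (rogers_hasDerivAt hw0 hw1).comp z hw
  have H4 := rogers_hasDerivAt hz0 hz1
  have Htot := ((H1.add H2).add H3).sub H4
  refine Htot.congr_deriv (Eq.symm ?_)
  symm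

  have e1 : 1 - x*(1-z)/(1-x*z) = (1-x)/(1-x*z) := by field_simp; ring
  have e2 : 1 - z*(1-x)/(1-x*z) = (1-z)/(1-x*z) := by
    rw [eq_div_iff hd.ne', sub_mul, div_mul_cancel₀ _ hd.ne']; ring
  rw [e1, e2, Real.log_mul hx0.ne' hz0.ne',
    Real.log_div (by positivity) hd.ne', Real.log_div (by positivity) hd.ne',
    Real.log_div (by positivity) hd.ne', Real.log_div (by positivity) hd.ne',
    Real.log_mul hx0.ne' h1z.ne', Real.log_mul hz0.ne' h1x.ne']
  field_simp
  ring

lemma eq_of_deriv_zero {G : ℝ → ℝ} (h : ∀ z ∈ Set.Ioo (0:ℝ) 1, HasDerivAt G 0 z)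
    {a b : ℝ} (ha : a ∈ Set.Ioo (0:ℝ) 1) (hb : b ∈ Set.Ioo (0:ℝ) 1) : G a = G b := by
  have key : ∀ {a b : ℝ}, a ∈ Set.Ioo (0:ℝ) 1 → b ∈ Set.Ioo (0:ℝ) 1 → a < b → G a = G b := by
    intro a b ha hb hab
    have cont : ContinuousOn G (Set.Icc a b) := fun t ht =>
      ((h t ⟨lt_of_lt_of_le ha.1 ht.1, lt_of_le_of_lt ht.2 hb.2⟩).continuousAt).continuousWithinAt
    have der : ∀ t ∈ Set.Ioo a b, HasDerivAt G 0 t := fun t ht =>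
      h t ⟨ha.1.trans ht.1, ht.2.trans hb.2⟩
    obtain ⟨c, _, hc2⟩ := exists_hasDerivAt_eq_slope G (fun _ => 0) hab cont der
    have hba : b - a ≠ 0 := by intro h'; linarith
    rcases div_eq_zero_iff.1 hc2.symm with h' | h'
    · linarith
    · exact absurd h' hba
  rcases lt_trichotomy a b with hab | rfl | hab
  · exact key ha hb hab
  · rfl
  · exact (key hb ha hab).symm


/-- the five-term (pentagon) identity for the Rogers dilogarithm:
for `0 < x, y < 1`,
`L(x) + L(y) = L(xy) + L(x(1-y)/(1-xy)) + L(y(1-x)/(1-xy))`. -/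
theorem rogers_pentagon (x y : ℝ) (hx0 : 0 < x) (hx1 : x < 1) (hy0 : 0 < y) (hy1 : y < 1) :
    RogersL x + RogersL y =
      RogersL (x * y) + RogersL (x * (1 - y) / (1 - x * y)) +
        RogersL (y * (1 - x) / (1 - x * y)) := by
  set G := fun z : ℝ => RogersL (x*z) + RogersL (x*(1-z)/(1-x*z)) +
    RogersL (z*(1-x)/(1-x*z)) - RogersL z with hG
  have hder : ∀ z ∈ Set.Ioo (0:ℝ) 1, HasDerivAt G 0 z := fun z hz =>
    rogers_deriv_zero x hx0 hx1 hz
  have hy : y ∈ Set.Ioo (0:ℝ) 1 := ⟨hy0, hy1⟩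
  have hconst : ∀ z ∈ Set.Ioo (0:ℝ) 1, G z = G y := fun z hz => eq_of_deriv_zero hder hz hy
  have t1 : Tendsto (fun z : ℝ => RogersL (x*z)) (nhdsWithin 0 (Set.Ioi 0)) (nhds 0) := by
    apply tendsto_rogers_zero.comp
    apply tendsto_nhdsWithin_of_tendsto_nhds_of_eventually_within
    · have h' : Continuous (fun z : ℝ => x*z) := by fun_prop
      have := (h'.tendsto 0).mono_left (nhdsWithin_le_nhds (s := Set.Ioi (0:ℝ)))
      simpa using this
    · filter_upwards [self_mem_nhdsWithin] with z hz
      exact mul_pos hx0 hz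
  have t2 : Tendsto (fun z : ℝ => RogersL (x*(1-z)/(1-x*z))) (nhdsWithin 0 (Set.Ioi 0))
      (nhds (RogersL x)) := by
    have hc : ContinuousAt RogersL x := (rogers_hasDerivAt hx0 hx1).continuousAt
    have hin : Tendsto (fun z : ℝ => x*(1-z)/(1-x*z)) (nhds 0) (nhds x) := by
      have h' : ContinuousAt (fun z : ℝ => x*(1-z)/(1-x*z)) 0 := by
        apply ContinuousAt.div (by fun_prop) (by fun_prop)
        norm_num
      have := h'.tendsto
      norm_num at this
      exact this
    exact hc.tendsto.comp (hin.mono_left nhdsWithin_le_nhds)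
  have t3 : Tendsto (fun z : ℝ => RogersL (z*(1-x)/(1-x*z))) (nhdsWithin 0 (Set.Ioi 0))
      (nhds 0) := by
    apply tendsto_rogers_zero.comp
    apply tendsto_nhdsWithin_of_tendsto_nhds_of_eventually_within
    · have h' : ContinuousAt (fun z : ℝ => z*(1-x)/(1-x*z)) 0 := by
        apply ContinuousAt.div (by fun_prop) (by fun_prop)
        norm_num
      have := h'.tendsto
      norm_num at this
      exact this.mono_left nhdsWithin_le_nhds
    · filter_upwards [Ioo_mem_nhdsGT_of_mem
        (by constructor <;> norm_num : (0:ℝ) ∈ Set.Ico (0:ℝ) 1)] with z hz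
      have hdz : 0 < 1 - x*z := by nlinarith [hz.1, hz.2]
      have h1x : 0 < 1 - x := by linarith
      have hz0 : 0 < z := hz.1
      exact Set.mem_Ioi.2 (by positivity)
  have hT : Tendsto G (nhdsWithin 0 (Set.Ioi 0)) (nhds (RogersL x)) := by
    have := ((t1.add t2).add t3).sub tendsto_rogers_zero
    simpa [hG] using this
  have hT' : Tendsto G (nhdsWithin 0 (Set.Ioi 0)) (nhds (G y)) := by
    apply Tendsto.congr' _ tendsto_const_nhds
    filter_upwards [Ioo_mem_nhdsGT_of_mem
      (by constructor <;> norm_num : (0:ℝ) ∈ Set.Ico (0:ℝ) 1)] with z hz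
    exact (hconst z hz).symm
  have hkey : G y = RogersL x := tendsto_nhds_unique hT' hT
  have : RogersL (x*y) + RogersL (x*(1-y)/(1-x*y)) + RogersL (y*(1-x)/(1-x*y)) - RogersL y =
      RogersL x := hkey
  linarith
end
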